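/- The subgroup Γ_L acts freely on the upper half-plane: for every g ∈ Γ_L and every z ∈ ℍ, if g • z = z then g = 1. -/

import Mathlib

open UpperHalfPlane MatrixGroups

noncomputable section

set_option maxRecDepth 4000
set_option synthInstance.maxHeartbeats 400000

/-- The generator `A n = !![8n+4, −(1+8n(8n+4)); 1, −8n]` of the Loch Ness monster group. -/
def A (n : ℤ) : SL(2, ℝ) :=
  ⟨!![8 * (n : ℝ) + 4, -(1 + 8 * (n : ℝ) * (8 * (n : ℝ) + 4)); 1, -(8 * (n : ℝ))], by
    rw [Matrix.det_fin_two_of]; ring⟩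

/-- The generator `B n = !![8n+6, −1−(8n+2)(8n+6); 1, −(8n+2)]` of the Loch Ness monster
group. -/
def B (n : ℤ) : SL(2, ℝ) :=
  ⟨!![8 * (n : ℝ) + 6, -1 - (8 * (n : ℝ) + 2) * (8 * (n : ℝ) + 6); 1, -(8 * (n : ℝ) + 2)], by
    rw [Matrix.det_fin_two_of]; ring⟩

/-- The subgroup of `SL(2,ℝ)` generated by the `A n` and `B n`, `n ∈ ℤ`. -/
def ΓL : Subgroup SL(2, ℝ) := Subgroup.closure (Set.range A ∪ Set.range B)

/-! ### Auxiliary: reduction mod 8 -/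

abbrev V8 := ZMod 8 × ZMod 8 × ZMod 8 × ZMod 8

def Lset : List V8 := [(0,1,7,4), (0,3,5,4), (1,0,0,1), (1,6,6,5), (2,1,3,2), (2,7,5,2),
  (3,0,0,3), (3,2,2,7), (4,5,3,0), (4,7,1,0), (5,2,2,1), (5,4,4,5), (6,3,1,6), (6,5,7,6),
  (7,4,4,7), (7,6,6,3)]

def tmul (p q : V8) : V8 :=
  (p.1*q.1 + p.2.1*q.2.2.1, p.1*q.2.1 + p.2.1*q.2.2.2,
   p.2.2.1*q.1 + p.2.2.2*q.2.2.1, p.2.2.1*q.2.1 + p.2.2.2*q.2.2.2)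

def tadj (p : V8) : V8 := (p.2.2.2, -p.2.1, -p.2.2.1, p.1)

lemma Lm_mul : ∀ p ∈ Lset, ∀ q ∈ Lset, tmul p q ∈ Lset := by
  intro p hp q hq
  fin_cases hp <;> fin_cases hq <;> decide

lemma L_adj : ∀ p ∈ Lset, tadj p ∈ Lset := by
  intro p hp; fin_cases hp <;> decide

lemma L_one : ((1,0,0,1) : V8) ∈ Lset := by decide

lemma L_trace : ∀ p ∈ Lset, p.1 + p.2.2.2 = 2 ∨ p.1 + p.2.2.2 = 4 ∨ p.1 + p.2.2.2 = 6 := by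
  intro p hp; fin_cases hp <;> decide

lemma L_ne : ∀ p ∈ Lset, ¬(p.1 = 7 ∧ p.2.1 = 0 ∧ p.2.2.1 = 0 ∧ p.2.2.2 = 7) := by
  intro p hp; fin_cases hp <;> decide

def tu (m : Matrix (Fin 2) (Fin 2) (ZMod 8)) : V8 := (m 0 0, m 0 1, m 1 0, m 1 1)

lemma tu_mul (x y : Matrix (Fin 2) (Fin 2) (ZMod 8)) : tu (x * y) = tmul (tu x) (tu y) := by
  simp [tu, tmul, Matrix.mul_apply, Fin.sum_univ_two]

lemma tu_adj (x : Matrix (Fin 2) (Fin 2) (ZMod 8)) : tu x.adjugate = tadj (tu x) := by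
  rw [Matrix.adjugate_fin_two]
  simp [tu, tadj]

abbrev φr : SL(2, ℤ) →* SL(2, ℝ) := Matrix.SpecialLinearGroup.map (Int.castRingHom ℝ)
abbrev ψ8 : SL(2, ℤ) →* Matrix.SpecialLinearGroup (Fin 2) (ZMod 8) :=
  Matrix.SpecialLinearGroup.map (Int.castRingHom (ZMod 8))

/-- The invariant predicate. -/
def P (g : SL(2, ℝ)) : Prop := ∃ M : SL(2, ℤ), φr M = g ∧ tu (ψ8 M).1 ∈ Lset

def Az (n : ℤ) : SL(2, ℤ) :=
  ⟨!![8 * n + 4, -(1 + 8 * n * (8 * n + 4)); 1, -(8 * n)], by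
    rw [Matrix.det_fin_two_of]; ring⟩

def Bz (n : ℤ) : SL(2, ℤ) :=
  ⟨!![8 * n + 6, -1 - (8 * n + 2) * (8 * n + 6); 1, -(8 * n + 2)], by
    rw [Matrix.det_fin_two_of]; ring⟩

lemma eight_zmod : (8 : ZMod 8) = 0 := by decide

lemma hP_A (n : ℤ) : P (A n) := by
  refine ⟨Az n, ?_, ?_⟩
  · ext i j
    simp only [Matrix.SpecialLinearGroup.map_apply_coe]
    fin_cases i <;> fin_cases j <;>
      simp [Az, A, Matrix.SpecialLinearGroup.map_apply_coe, RingHom.mapMatrix_apply,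
        Matrix.map_apply] <;> push_cast <;> ring
  · have h : tu (ψ8 (Az n)).1 = (4, 7, 1, 0) := by
      simp only [Matrix.SpecialLinearGroup.map_apply_coe]
      simp only [tu, Az, Matrix.SpecialLinearGroup.map_apply_coe, RingHom.mapMatrix_apply,
        Matrix.map_apply, Int.coe_castRingHom, Matrix.of_apply, Matrix.cons_val', Matrix.cons_val_zero,
        Matrix.cons_val_one, Matrix.head_cons, Matrix.empty_val', Matrix.cons_val_fin_one,
        Matrix.head_fin_const]
      push_cast
      rw [eight_zmod]
      norm_num
      decide
    rw [h]; decide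

lemma hP_B (n : ℤ) : P (B n) := by
  refine ⟨Bz n, ?_, ?_⟩
  · ext i j
    simp only [Matrix.SpecialLinearGroup.map_apply_coe]
    fin_cases i <;> fin_cases j <;>
      simp [Bz, B, Matrix.SpecialLinearGroup.map_apply_coe, RingHom.mapMatrix_apply,
        Matrix.map_apply] <;> push_cast <;> ring
  · have h : tu (ψ8 (Bz n)).1 = (6, 3, 1, 6) := by
      simp only [Matrix.SpecialLinearGroup.map_apply_coe]
      simp only [tu, Bz, Matrix.SpecialLinearGroup.map_apply_coe, RingHom.mapMatrix_apply,
        Matrix.map_apply, Int.coe_castRingHom, Matrix.of_apply, Matrix.cons_val', Matrix.cons_val_zero,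
        Matrix.cons_val_one, Matrix.head_cons, Matrix.empty_val', Matrix.cons_val_fin_one,
        Matrix.head_fin_const]
      push_cast
      rw [eight_zmod]
      norm_num
      decide
    rw [h]; decide

lemma hP_all : ∀ g ∈ ΓL, P g := by
  intro g hg
  refine Subgroup.closure_induction (p := fun x _ => P x) ?_ ?_ ?_ ?_ hg
  · rintro x (⟨n, rfl⟩ | ⟨n, rfl⟩)
    · exact hP_A n
    · exact hP_B n
  · exact ⟨1, by simp, by
      have : tu ((ψ8 (1 : SL(2,ℤ))).1) = (1,0,0,1) := by
        simp [tu, Matrix.one_apply]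
      rw [this]; exact L_one⟩
  · rintro x y _ _ ⟨M, rfl, hM⟩ ⟨N, rfl, hN⟩
    exact ⟨M * N, by simp, by
      rw [map_mul, Matrix.SpecialLinearGroup.coe_mul, tu_mul]
      exact Lm_mul _ hM _ hN⟩
  · rintro x _ ⟨M, rfl, hM⟩
    exact ⟨M⁻¹, by simp, by
      rw [map_inv, Matrix.SpecialLinearGroup.coe_inv, tu_adj]
      exact L_adj _ hM⟩


/-- `Γ_L` acts freely on the upper half-plane. -/
theorem stmt_5 : ∀ g ∈ ΓL, ∀ z : ℍ, g • z = z → g = 1 := by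
  intro g hg z hz
  obtain ⟨M, rfl, hM⟩ := hP_all g hg
  have hcoe : ∀ i j, (φr M).1 i j = ((M.1 i j : ℤ) : ℝ) := fun i j => rfl
  have hdet : M.1 0 0 * M.1 1 1 - M.1 0 1 * M.1 1 0 = 1 := by
    have := M.2
    rwa [Matrix.det_fin_two] at this
  -- fixed point equation over ℂ
  have h1 : ((φr M).1 0 0 : ℂ) * z + (φr M).1 0 1
      = (z : ℂ) * ((φr M).1 1 0 * z + (φr M).1 1 1) := by
    have h1 : (↑(φr M • z) : ℂ) = (z : ℂ) := by rw [hz]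
    rw [UpperHalfPlane.coe_specialLinearGroup_apply] at h1
    rw [div_eq_iff (by simpa [UpperHalfPlane.denom] using UpperHalfPlane.denom_ne_zero (Matrix.SpecialLinearGroup.mapGL ℝ (φr M)) z)] at h1
    simpa using h1
  rw [hcoe, hcoe, hcoe, hcoe] at h1
  rw [Complex.ext_iff] at h1
  obtain ⟨hre, him⟩ := h1
  simp only [Complex.add_re, Complex.add_im, Complex.mul_re, Complex.mul_im,
    Complex.ofReal_re, Complex.ofReal_im, UpperHalfPlane.coe_re, UpperHalfPlane.coe_im] at hre him
  set a : ℤ := M.1 0 0 with ha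
  set b : ℤ := M.1 0 1 with hb
  set c : ℤ := M.1 1 0 with hc
  set d : ℤ := M.1 1 1 with hd
  set x : ℝ := z.re with hx
  set y : ℝ := z.im with hy
  have hy0 : 0 < y := z.2
  have him'' : (a : ℝ) - d = 2 * c * x := by
    have h2 : ((a : ℝ) - d - 2 * c * x) * y = 0 := by linear_combination him
    rcases mul_eq_zero.1 h2 with h | h
    · linarith
    · exact absurd h (by positivity)
  have hbr : (b : ℝ) = -c * (x ^ 2 + y ^ 2) := by
    linear_combination hre - x * him''
  have hdetR : (a : ℝ) * d - b * c = 1 := by exact_mod_cast hdet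
  have key : ((a : ℝ) + d) ^ 2 = 4 - 4 * c ^ 2 * y ^ 2 := by
    linear_combination ((a : ℝ) - d + 2 * c * x) * him'' + 4 * (c : ℝ) * hbr + 4 * hdetR
  -- trace mod 8
  have hψ : ∀ i j, (ψ8 M).1 i j = ((M.1 i j : ℤ) : ZMod 8) := fun i j => rfl
  have htr8 : ((a + d : ℤ) : ZMod 8) = 2 ∨ ((a + d : ℤ) : ZMod 8) = 4
      ∨ ((a + d : ℤ) : ZMod 8) = 6 := by
    have h := L_trace _ hM
    simp only [tu, hψ] at h
    push_cast at h ⊢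
    exact h
  -- c must vanish
  have hc0 : (c : ℝ) = 0 := by
    by_contra hc0
    have h5 : (0:ℝ) < (c:ℝ) ^ 2 * y ^ 2 :=
      lt_of_le_of_ne (by positivity)
        (Ne.symm (mul_ne_zero (pow_ne_zero 2 hc0) (pow_ne_zero 2 hy0.ne')))
    have h4 : ((a : ℝ) + d) ^ 2 < 4 := by linarith [key]
    have h4' : ((a + d : ℤ) : ℝ) ^ 2 < 4 := by push_cast; exact h4
    have h4'' : (a + d) ^ 2 < 4 := by exact_mod_cast h4'
    have hge1 : -1 ≤ a + d := by nlinarith [sq_nonneg (a + d + 2)]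
    have hge2 : a + d ≤ 1 := by nlinarith [sq_nonneg (a + d - 2)]
    set t : ℤ := a + d with htt
    interval_cases t <;> revert htr8 <;> decide
  have hcz : c = 0 := by exact_mod_cast hc0
  have hadz : a = d := by
    have : (a : ℝ) = d := by rw [hc0] at him''; linarith
    exact_mod_cast this
  have hbz : b = 0 := by
    have : (b : ℝ) = 0 := by rw [hbr, hc0]; ring
    exact_mod_cast this
  have hmul : a * a = 1 := by
    have h := hdet
    rw [hcz, mul_zero, sub_zero, ← hadz] at h
    exact h
  rcases Int.eq_one_or_neg_one_of_mul_eq_one hmul with ha1 | ha1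
  · -- M = 1
    have hM1 : M = 1 := by
      apply Subtype.ext
      ext i j
      fin_cases i <;> fin_cases j <;>
        simp only [Matrix.SpecialLinearGroup.coe_one, Matrix.one_apply_eq,
          Matrix.one_apply_ne, ne_eq, Fin.mk_zero, Fin.mk_one, not_false_eq_true]
      · exact ha1
      · exact hbz
      · exact hcz
      · show d = 1
        omega
    rw [hM1, map_one]
  · -- contradiction with -1 ∉ image
    exfalso
    apply L_ne _ hM
    have e1 : (tu (ψ8 M).1).1 = ((a : ℤ) : ZMod 8) := rfl
    have e2 : (tu (ψ8 M).1).2.1 = ((b : ℤ) : ZMod 8) := rfl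
    have e3 : (tu (ψ8 M).1).2.2.1 = ((c : ℤ) : ZMod 8) := rfl
    have e4 : (tu (ψ8 M).1).2.2.2 = ((d : ℤ) : ZMod 8) := rfl
    refine ⟨?_, ?_, ?_, ?_⟩
    · rw [e1, ha1]; decide
    · rw [e2, hbz]; decide
    · rw [e3, hcz]; decide
    · rw [e4, ← hadz, ha1]; decide
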